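/- Let Γ be a cancellation monoid with neutral element e, A a Γ-graded local ring, and M a finitely generated Γ-graded A-module. Then any two minimal homogeneous generating sets of M have the same (finite) number of elements. -/

import Mathlib

open DirectSum

section Aux

variable {Γ : Type*} [AddCancelMonoid Γ] [DecidableEq Γ]

private lemma cancel_comm_zero {γ ε : Γ} (h : γ + ε = 0) : ε + γ = 0 := by
  have h2 : (ε + γ) + (ε + γ) = (ε + γ) + 0 := by
    rw [add_zero, add_assoc, ← add_assoc γ ε γ, h, zero_add]
  exact add_left_cancel h2

/-- The degree-`δ` projection of a graded additive group, as an additive hom. -/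
private def projHom {M : Type*} [AddCommGroup M] (ℳ : Γ → AddSubgroup M)
    [DirectSum.Decomposition ℳ] (δ : Γ) : M →+ M where
  toFun m := (DirectSum.decompose ℳ m δ : M)
  map_zero' := by
    show (DirectSum.decompose ℳ (0 : M) δ : M) = 0
    rw [DirectSum.decompose_zero]; rfl
  map_add' m n := by
    show (DirectSum.decompose ℳ (m + n) δ : M) = _
    rw [DirectSum.decompose_add]; rfl

private lemma projHom_apply {M : Type*} [AddCommGroup M] (ℳ : Γ → AddSubgroup M)
    [DirectSum.Decomposition ℳ] (δ : Γ) (m : M) :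
    projHom ℳ δ m = (DirectSum.decompose ℳ m δ : M) := rfl

variable {A : Type*} [Ring A] (𝒜 : Γ → AddSubgroup A) [GradedRing 𝒜]
variable {M : Type*} [AddCommGroup M] [Module A M]
variable (ℳ : Γ → AddSubgroup M) [SetLike.GradedSMul 𝒜 ℳ] [DirectSum.Decomposition ℳ]

private lemma smul_mem' {a : A} {m : M} {i j : Γ} (ha : a ∈ 𝒜 i) (hm : m ∈ ℳ j) :
    a • m ∈ ℳ (i + j) :=
  SetLike.GradedSMul.smul_mem ha hm

/-- Homogeneous coefficient extraction: a homogeneous element of the span of a finite set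
of homogeneous elements can be written with homogeneous coefficients of matching degrees. -/
private lemma homog_coeffs (G : Finset M) (γM : M → Γ) (hG : ∀ g ∈ G, g ∈ ℳ (γM g))
    {y : M} {δ : Γ} (hy : y ∈ ℳ δ) (hspan : y ∈ Submodule.span A (G : Set M)) :
    ∃ c : M → A, (∑ g ∈ G, c g • g) = y ∧
      ∀ g ∈ G, c g = 0 ∨ ∃ ε : Γ, c g ∈ 𝒜 ε ∧ ε + γM g = δ := by
  classical
  obtain ⟨f, -, hf⟩ := Submodule.mem_span_finset.mp hspan
  set c : M → A := fun g =>
    ∑ ε ∈ (DirectSum.decompose 𝒜 (f g)).support.filter (fun ε => ε + γM g = δ),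
      (DirectSum.decompose 𝒜 (f g) ε : A) with hc
  refine ⟨c, ?_, ?_⟩
  · have key : ∀ g ∈ G, projHom ℳ δ (f g • g) = c g • g := by
      intro g hg
      conv_lhs => rw [← DirectSum.sum_support_decompose 𝒜 (f g)]
      rw [Finset.sum_smul, map_sum, hc]
      beta_reduce
      rw [Finset.sum_filter, Finset.sum_smul]
      refine Finset.sum_congr rfl fun ε _ => ?_
      have hmem : (DirectSum.decompose 𝒜 (f g) ε : A) • g ∈ ℳ (ε + γM g) :=
        smul_mem' 𝒜 ℳ (SetLike.coe_mem _) (hG g hg)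
      by_cases hεδ : ε + γM g = δ
      · rw [if_pos hεδ, projHom_apply]
        exact DirectSum.decompose_of_mem_same ℳ (hεδ ▸ hmem)
      · rw [if_neg hεδ, zero_smul, projHom_apply]
        exact DirectSum.decompose_of_mem_ne ℳ hmem hεδ
    calc (∑ g ∈ G, c g • g) = ∑ g ∈ G, projHom ℳ δ (f g • g) :=
          (Finset.sum_congr rfl key).symm
      _ = projHom ℳ δ (∑ g ∈ G, f g • g) := (map_sum _ _ _).symm
      _ = projHom ℳ δ y := by rw [hf]
      _ = y := DirectSum.decompose_of_mem_same ℳ hy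
  · intro g hg
    set F := (DirectSum.decompose 𝒜 (f g)).support.filter (fun ε => ε + γM g = δ) with hF
    rcases F.eq_empty_or_nonempty with hFe | ⟨ε₀, hε₀⟩
    · left; rw [hc]; beta_reduce; rw [← hF, hFe, Finset.sum_empty]
    · right
      have hε₀' := Finset.mem_filter.mp hε₀
      have hFs : F = {ε₀} := by
        apply Finset.eq_singleton_iff_unique_mem.mpr
        refine ⟨hε₀, fun ε hε => ?_⟩
        have h2 := (Finset.mem_filter.mp hε).2
        exact add_right_cancel (h2.trans hε₀'.2.symm)
      refine ⟨ε₀, ?_, hε₀'.2⟩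
      rw [hc]
      beta_reduce
      rw [← hF, hFs, Finset.sum_singleton]
      exact SetLike.coe_mem _

/-- The coercion from the degree-zero part, as a ring hom. -/
private def coeHom0 : (𝒜 0) →+* A where
  toFun x := x
  map_one' := rfl
  map_mul' _ _ := rfl
  map_zero' := rfl
  map_add' _ _ := rfl

private lemma nontrivialA [IsLocalRing (𝒜 0)] : Nontrivial A := by
  refine ⟨0, 1, fun h => ?_⟩
  exact zero_ne_one (α := (𝒜 0)) (Subtype.ext h)

/-- Key lemma: if `a, c` are homogeneous of complementary degrees and `a * c` is a unit,
then `a` is left invertible.  Uses locality of the degree-zero part and cancellativity. -/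
private lemma exists_left_inv_of_isUnit [IsLocalRing (𝒜 0)] {a c : A} {γ ε : Γ}
    (ha : a ∈ 𝒜 γ) (hc : c ∈ 𝒜 ε) (hγε : γ + ε = 0) (h : IsUnit (a * c)) :
    ∃ v : A, v * a = 1 := by
  classical
  obtain ⟨u, hu⟩ := h
  have hac : a * c ∈ 𝒜 0 := by
    have := SetLike.mul_mem_graded ha hc; rwa [hγε] at this
  have h1 : (a * c) * ((u⁻¹ : Aˣ) : A) = 1 := by rw [← hu]; exact u.mul_inv
  set w : A := ((u⁻¹ : Aˣ) : A) with hwdef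
  set w0 : A := (DirectSum.decompose 𝒜 w 0 : A) with hw0def
  have hw0mem : w0 ∈ 𝒜 0 := SetLike.coe_mem _
  have hw0 : (a * c) * w0 = 1 := by
    have hproj : projHom 𝒜 0 ((a * c) * w) = (a * c) * w0 := by
      conv_lhs => rw [← DirectSum.sum_support_decompose 𝒜 w]
      rw [Finset.mul_sum, map_sum]
      rw [Finset.sum_eq_single 0]
      · rw [projHom_apply]
        have hmem : (a * c) * (DirectSum.decompose 𝒜 w 0 : A) ∈ 𝒜 0 := by
          have := SetLike.mul_mem_graded hac (SetLike.coe_mem (DirectSum.decompose 𝒜 w 0))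
          rwa [zero_add] at this
        rw [DirectSum.decompose_of_mem_same 𝒜 hmem, ← hw0def]
      · intro η _ hη0
        have hmem : (a * c) * (DirectSum.decompose 𝒜 w η : A) ∈ 𝒜 η := by
          have := SetLike.mul_mem_graded hac (SetLike.coe_mem (DirectSum.decompose 𝒜 w η))
          rwa [zero_add] at this
        rw [projHom_apply]
        exact DirectSum.decompose_of_mem_ne 𝒜 hmem hη0
      · intro h0
        have : (DirectSum.decompose 𝒜 w 0 : A) = 0 := by
          rw [DFinsupp.notMem_support_iff.mp h0]; rfl
        rw [this, mul_zero, map_zero]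
    have h1' : projHom 𝒜 0 ((a * c) * w) = 1 := by
      rw [h1, projHom_apply]
      exact DirectSum.decompose_of_mem_same 𝒜 (SetLike.one_mem_graded 𝒜)
    rw [← hproj, h1']
  set r : A := c * w0 with hrdef
  have hrmem : r ∈ 𝒜 ε := by
    have := SetLike.mul_mem_graded hc hw0mem; rwa [add_zero] at this
  have har : a * r = 1 := by rw [hrdef, ← mul_assoc]; exact hw0
  have hεγ : ε + γ = 0 := cancel_comm_zero hγε
  have hemem : r * a ∈ 𝒜 0 := by
    have := SetLike.mul_mem_graded hrmem ha; rwa [hεγ] at this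
  have hee : (r * a) * (r * a) = r * a := by
    rw [mul_assoc r a (r * a), ← mul_assoc a r a, har, one_mul]
  set eh : (𝒜 0) := ⟨r * a, hemem⟩ with hehdef
  by_cases hU : IsUnit eh
  · refine ⟨r, ?_⟩
    have h2 : eh * eh = eh * 1 := by
      rw [mul_one]; exact Subtype.ext hee
    have h3 := hU.mul_left_cancel h2
    have h4 := congrArg (Subtype.val) h3
    simpa using h4
  · have hadd : (1 - eh) + eh = 1 := sub_add_cancel _ _
    have hunit : IsUnit (1 - eh) := by
      rcases IsLocalRing.isUnit_or_isUnit_of_add_one hadd with h' | h'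
      · exact h'
      · exact absurd h' hU
    obtain ⟨t, ht⟩ := hunit
    have hmul : eh * (1 - eh) = 0 := by
      apply Subtype.ext
      have : (r * a) * (1 - (r * a)) = 0 := by
        rw [mul_sub, mul_one, hee, sub_self]
      simpa using this
    have he0 : eh = 0 := by
      calc eh = eh * ((1 - eh) * ((t⁻¹ : (𝒜 0)ˣ) : (𝒜 0))) := by
            rw [← ht, Units.mul_inv, mul_one]
        _ = (eh * (1 - eh)) * ((t⁻¹ : (𝒜 0)ˣ) : (𝒜 0)) := by rw [mul_assoc]
        _ = 0 := by rw [hmul, zero_mul]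
    have hra0 : r * a = 0 := by
      have := congrArg (Subtype.val) he0; exact this
    have ha0 : a = 0 := by
      calc a = (a * r) * a := by rw [har, one_mul]
        _ = a * (r * a) := by rw [mul_assoc]
        _ = 0 := by rw [hra0, mul_zero]
    have h01 : (0 : A) = 1 := by
      rw [ha0, zero_mul] at hu
      exact isUnit_zero_iff.mp ⟨u, hu⟩
    have : Subsingleton A := subsingleton_of_zero_eq_one h01
    exact ⟨1, Subsingleton.elim _ _⟩

private lemma locRing_isUnit_or {R : Type*} [Ring R] [IsLocalRing R] {a b : R}
    (h : IsUnit (a + b)) : IsUnit a ∨ IsUnit b := by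
  obtain ⟨u, hu⟩ := h
  have h1 : (↑u⁻¹ : R) * a + (↑u⁻¹ : R) * b = 1 := by
    rw [← mul_add, ← hu]; exact u.inv_mul
  rcases IsLocalRing.isUnit_or_isUnit_of_add_one h1 with h' | h'
  · left
    have ha : a = ↑u * ((↑u⁻¹ : R) * a) := by rw [← mul_assoc, u.mul_inv, one_mul]
    rw [ha]; exact u.isUnit.mul h'
  · right
    have hb : b = ↑u * ((↑u⁻¹ : R) * b) := by rw [← mul_assoc, u.mul_inv, one_mul]
    rw [hb]; exact u.isUnit.mul h'

private lemma gen_one_sub_sum_isUnit {R : Type*} [Ring R] [IsLocalRing R] {ι : Type*}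
    (S : Finset ι) (t : ι → R) (ht : ∀ s ∈ S, ¬ IsUnit (t s)) :
    IsUnit (1 - ∑ s ∈ S, t s) := by
  classical
  have hnon : ¬ IsUnit (∑ s ∈ S, t s) := by
    induction S using Finset.induction_on with
    | empty => rw [Finset.sum_empty]; exact not_isUnit_zero (M₀ := R)
    | @insert s S hsS ih =>
      rw [Finset.sum_insert hsS]
      have h1 := ih fun x hx => ht x (Finset.mem_insert_of_mem hx)
      have h2 : ¬ IsUnit (t s) := ht s (Finset.mem_insert_self _ _)
      intro h
      rcases locRing_isUnit_or h with h' | h'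
      · exact h2 h'
      · exact h1 h'
  have hadd : (1 - ∑ s ∈ S, t s) + ∑ s ∈ S, t s = 1 := sub_add_cancel _ _
  rcases IsLocalRing.isUnit_or_isUnit_of_add_one hadd with h' | h'
  · exact h'
  · exact absurd h' hnon

/-- One minus a finite sum of degree-zero non-units is a unit. -/
private lemma isUnit_one_sub_sum [IsLocalRing (𝒜 0)] (S : Finset M) (t : M → A)
    (ht : ∀ s ∈ S, t s ∈ 𝒜 0 ∧ ¬ IsUnit (t s)) : IsUnit (1 - ∑ s ∈ S, t s) := by
  classical
  set t' : M → (𝒜 0) := fun s => if h : t s ∈ 𝒜 0 then ⟨t s, h⟩ else 0 with ht'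
  have hco : ∀ s ∈ S, ((t' s : A)) = t s := by
    intro s hs
    rw [ht']
    beta_reduce
    rw [dif_pos (ht s hs).1]
  have hU : IsUnit (1 - ∑ s ∈ S, t' s) := by
    apply gen_one_sub_sum_isUnit
    intro s hs hu
    have := hu.map (coeHom0 𝒜)
    rw [show (coeHom0 𝒜) (t' s) = ((t' s : A)) from rfl, hco s hs] at this
    exact (ht s hs).2 this
  have := hU.map (coeHom0 𝒜)
  have hce : (coeHom0 𝒜) (1 - ∑ s ∈ S, t' s) = 1 - ∑ s ∈ S, t s := by
    rw [map_sub, map_one, map_sum]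
    congr 1
    exact Finset.sum_congr rfl fun s hs => hco s hs
  rwa [hce] at this

/-- Exchange lemma: a minimal homogeneous generating finset is at most as large as any
homogeneous generating finset. -/
private lemma card_le_card [IsLocalRing (𝒜 0)] (Ω₁ Ω₂ : Finset M)
    (h₁hom : ∀ x ∈ Ω₁, ∃ γ : Γ, x ∈ ℳ γ)
    (h₂hom : ∀ x ∈ Ω₂, ∃ γ : Γ, x ∈ ℳ γ)
    (h₁gen : Submodule.span A (Ω₁ : Set M) = ⊤)
    (h₂gen : Submodule.span A (Ω₂ : Set M) = ⊤)
    (h₂min : ∀ y ∈ Ω₂, y ∉ Submodule.span A ((Ω₂ : Set M) \ {y})) :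
    Ω₂.card ≤ Ω₁.card := by
  classical
  have hA : Nontrivial A := nontrivialA 𝒜
  set d : M → Γ := fun x => if h : ∃ γ : Γ, x ∈ ℳ γ then h.choose else 0 with hd_def
  have hd : ∀ x : M, (∃ γ : Γ, x ∈ ℳ γ) → x ∈ ℳ (d x) := by
    intro x h
    rw [hd_def]
    beta_reduce
    rw [dif_pos h]
    exact h.choose_spec
  have key : ∀ T : Finset M, T ⊆ Ω₂ →
      ∃ S : Finset M, S ⊆ Ω₁ ∧ Disjoint T S ∧ S.card + T.card = Ω₁.card ∧
        Submodule.span A ((T : Set M) ∪ (S : Set M)) = ⊤ := by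
    intro T
    induction T using Finset.induction_on with
    | empty =>
      intro _
      exact ⟨Ω₁, Finset.Subset.refl _, Finset.disjoint_empty_left _, by simp, by
        simpa using h₁gen⟩
    | @insert y T hyT ih =>
      intro hsub
      have hyΩ₂ : y ∈ Ω₂ := hsub (Finset.mem_insert_self _ _)
      have hTΩ₂ : T ⊆ Ω₂ := fun x hx => hsub (Finset.mem_insert_of_mem hx)
      obtain ⟨S, hSΩ₁, hdisj, hcard, hspan⟩ := ih hTΩ₂
      by_cases hyS : y ∈ S
      · refine ⟨S.erase y, fun x hx => hSΩ₁ (Finset.mem_of_mem_erase hx), ?_, ?_, ?_⟩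
        · rw [Finset.disjoint_left]
          intro x hx hx'
          rcases Finset.mem_insert.mp hx with rfl | hxT
          · exact (Finset.notMem_erase _ _) hx'
          · exact (Finset.disjoint_left.mp hdisj hxT) (Finset.mem_of_mem_erase hx')
        · have hpos : 1 ≤ S.card := Finset.card_pos.mpr ⟨y, hyS⟩
          rw [Finset.card_erase_of_mem hyS, Finset.card_insert_of_notMem hyT]
          omega
        · have hset : ((insert y T : Finset M) : Set M) ∪ ((S.erase y : Finset M) : Set M)
              = (T : Set M) ∪ (S : Set M) := by
            ext x
            simp only [Finset.coe_insert, Set.mem_union, Set.mem_insert_iff,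
              Finset.coe_erase, Set.mem_diff, Finset.mem_coe, Set.mem_singleton_iff]
            constructor
            · rintro ((rfl | hx) | ⟨hx, _⟩)
              · exact Or.inr hyS
              · exact Or.inl hx
              · exact Or.inr hx
            · rintro (hx | hx)
              · exact Or.inl (Or.inr hx)
              · by_cases hxy : x = y
                · exact Or.inl (Or.inl hxy)
                · exact Or.inr ⟨hx, hxy⟩
          rw [hset]
          exact hspan
      · have hG : ∀ g ∈ T ∪ S, g ∈ ℳ (d g) := by
          intro g hg
          rcases Finset.mem_union.mp hg with h | h
          · exact hd g (h₂hom g (hTΩ₂ h))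
          · exact hd g (h₁hom g (hSΩ₁ h))
        have hy_mem : y ∈ ℳ (d y) := hd y (h₂hom y hyΩ₂)
        have hy_span : y ∈ Submodule.span A ((T ∪ S : Finset M) : Set M) := by
          rw [Finset.coe_union, hspan]
          trivial
        obtain ⟨c, hc_sum, hc_hom⟩ := homog_coeffs 𝒜 ℳ (T ∪ S) d hG hy_mem hy_span
        by_cases hex : ∃ s ∈ S, ∃ v : A, v * c s = 1
        · obtain ⟨s, hsS, v, hv⟩ := hex
          refine ⟨S.erase s, fun x hx => hSΩ₁ (Finset.mem_of_mem_erase hx), ?_, ?_, ?_⟩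
          · rw [Finset.disjoint_left]
            intro x hx hx'
            rcases Finset.mem_insert.mp hx with rfl | hxT
            · exact hyS (Finset.mem_of_mem_erase hx')
            · exact (Finset.disjoint_left.mp hdisj hxT) (Finset.mem_of_mem_erase hx')
          · have hpos : 1 ≤ S.card := Finset.card_pos.mpr ⟨s, hsS⟩
            rw [Finset.card_erase_of_mem hsS, Finset.card_insert_of_notMem hyT]
            omega
          · set P := Submodule.span A (((insert y T : Finset M) : Set M) ∪
              ((S.erase s : Finset M) : Set M)) with hP
            have hyP : y ∈ P := Submodule.subset_span (Or.inl (by simp))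
            have hTP : ∀ g ∈ T, g ∈ P := fun g hg =>
              Submodule.subset_span (Or.inl (by simp [hg]))
            have hEP : ∀ g ∈ S.erase s, g ∈ P := fun g hg =>
              Submodule.subset_span (Or.inr (Finset.mem_coe.mpr hg))
            have hsP : s ∈ P := by
              have hsum : (∑ g ∈ T, c g • g) + (c s • s + ∑ g ∈ S.erase s, c g • g) = y := by
                rw [← hc_sum, Finset.sum_union hdisj, Finset.add_sum_erase S (fun g => c g • g) hsS]
              have hmem : c s • s
                  = y - (∑ g ∈ T, c g • g) - (∑ g ∈ S.erase s, c g • g) := by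
                rw [← hsum]
                abel
              have h1 : c s • s ∈ P := by
                rw [hmem]
                refine Submodule.sub_mem _ (Submodule.sub_mem _ hyP ?_) ?_
                · exact Submodule.sum_mem _ fun g hg =>
                    Submodule.smul_mem _ _ (hTP g hg)
                · exact Submodule.sum_mem _ fun g hg =>
                    Submodule.smul_mem _ _ (hEP g hg)
              have h2 : (v * c s) • s ∈ P := by
                rw [mul_smul]
                exact Submodule.smul_mem _ _ h1
              rwa [hv, one_smul] at h2
            rw [eq_top_iff, ← hspan]
            apply Submodule.span_le.mpr
            intro x hx
            rcases hx with hx | hx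
            · exact hTP x (Finset.mem_coe.mp hx)
            · by_cases hxs : x = s
              · exact hxs ▸ hsP
              · exact hEP x (Finset.mem_erase.mpr ⟨hxs, Finset.mem_coe.mp hx⟩)
        · exfalso
          set N := Submodule.span A ((Ω₂ : Set M) \ {y}) with hN
          have HS : ∀ s : M, ∃ e : M → A, s ∈ S →
              ((∑ w ∈ Ω₂, e w • w) = s ∧
                ∀ w ∈ Ω₂, e w = 0 ∨ ∃ η : Γ, e w ∈ 𝒜 η ∧ η + d w = d s) := by
            intro s
            by_cases hs : s ∈ S
            · obtain ⟨e, he1, he2⟩ := homog_coeffs 𝒜 ℳ Ω₂ d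
                (fun w hw => hd w (h₂hom w hw)) (hd s (h₁hom s (hSΩ₁ hs)))
                (by rw [h₂gen]; trivial)
              exact ⟨e, fun _ => ⟨he1, he2⟩⟩
            · exact ⟨fun _ => 0, fun h => absurd h hs⟩
          choose e he using HS
          set D : A := ∑ s ∈ S, c s * e s y with hD
          have hTN : (∑ g ∈ T, c g • g) ∈ N := by
            refine Submodule.sum_mem _ fun g hg => Submodule.smul_mem _ _ ?_
            refine Submodule.subset_span ⟨Finset.mem_coe.mpr (hTΩ₂ hg), ?_⟩
            intro hgy
            rw [Set.mem_singleton_iff] at hgy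
            exact hyT (hgy ▸ hg)
          have hsN : ∀ s ∈ S, c s • s - (c s * e s y) • y ∈ N := by
            intro s hs
            obtain ⟨he1, he2⟩ := he s hs
            have hs_split : e s y • y + ∑ w ∈ Ω₂.erase y, e s w • w = s := by
              rw [Finset.add_sum_erase Ω₂ (fun w => e s w • w) hyΩ₂]
              exact he1
            have hsub2 : s - e s y • y = ∑ w ∈ Ω₂.erase y, e s w • w :=
              sub_eq_of_eq_add' hs_split.symm
            have hmem2 : s - e s y • y ∈ N := by
              rw [hsub2]
              refine Submodule.sum_mem _ fun w hw => Submodule.smul_mem _ _ ?_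
              refine Submodule.subset_span
                ⟨Finset.mem_coe.mpr (Finset.mem_of_mem_erase hw), ?_⟩
              intro hwy
              rw [Set.mem_singleton_iff] at hwy
              exact (Finset.ne_of_mem_erase hw) hwy
            have h3 := Submodule.smul_mem N (c s) hmem2
            rwa [smul_sub, smul_smul] at h3
          have hSN : (∑ s ∈ S, c s • s) - D • y ∈ N := by
            rw [hD, Finset.sum_smul, ← Finset.sum_sub_distrib]
            exact Submodule.sum_mem _ hsN
          have h1D : (1 - D) • y ∈ N := by
            have hy_eq : y = (∑ g ∈ T, c g • g) + ∑ s ∈ S, c s • s := by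
              rw [← hc_sum, Finset.sum_union hdisj]
            have heq : (1 - D) • y
                = (∑ g ∈ T, c g • g) + ((∑ s ∈ S, c s • s) - D • y) := by
              rw [sub_smul, one_smul]
              nth_rewrite 1 [hy_eq]
              abel
            rw [heq]
            exact Submodule.add_mem _ hTN hSN
          have hunit : IsUnit (1 - D) := by
            rw [hD]
            apply isUnit_one_sub_sum 𝒜
            intro s hs
            rcases hc_hom s (Finset.mem_union_right _ hs) with hc0 | ⟨ε, hcε, hεd⟩
            · rw [hc0, zero_mul]
              exact ⟨(𝒜 0).zero_mem, not_isUnit_zero⟩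
            · rcases (he s hs).2 y hyΩ₂ with he0 | ⟨η, heη, hηd⟩
              · rw [he0, mul_zero]
                exact ⟨(𝒜 0).zero_mem, not_isUnit_zero⟩
              · have hmem3 : c s * e s y ∈ 𝒜 (ε + η) := SetLike.mul_mem_graded hcε heη
                have hεη : ε + η = 0 := by
                  have h4 : (ε + η) + d y = 0 + d y := by
                    rw [add_assoc, hηd, hεd, zero_add]
                  exact add_right_cancel h4
                refine ⟨by rwa [hεη] at hmem3, ?_⟩
                intro hU
                obtain ⟨v, hv⟩ := exists_left_inv_of_isUnit 𝒜 hcε heη hεη hU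
                exact hex ⟨s, hs, v, hv⟩
          obtain ⟨u, hu⟩ := hunit
          have hyN : y ∈ N := by
            have h2 : ((u⁻¹ : Aˣ) : A) • ((1 - D) • y) ∈ N := Submodule.smul_mem _ _ h1D
            rwa [← hu, ← mul_smul, u.inv_mul, one_smul] at h2
          exact h₂min y hyΩ₂ hyN
  obtain ⟨S, _, _, hcard, _⟩ := key Ω₂ (Finset.Subset.refl _)
  omega

end Aux

/-- **Theorem 3.4(i).**  Let `Γ` be a cancellation monoid (written additively), `A` a
`Γ`-graded local ring (i.e. the degree-`0` part `A_0` is a local ring in the classical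
sense), and `M` a finitely generated `Γ`-graded `A`-module.  Then any two minimal
homogeneous generating sets of `M` are finite and have the same number of elements. -/
theorem minimal_homogeneous_generating_sets_equicardinal
    {Γ : Type*} [AddCancelMonoid Γ] [DecidableEq Γ]
    {A : Type*} [Ring A] (𝒜 : Γ → AddSubgroup A) [GradedRing 𝒜]
    [IsLocalRing (𝒜 0)]
    {M : Type*} [AddCommGroup M] [Module A M] [Module.Finite A M]
    (ℳ : Γ → AddSubgroup M) [SetLike.GradedSMul 𝒜 ℳ] [DirectSum.Decomposition ℳ]
    (Ω₁ Ω₂ : Set M)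
    (hΩ₁hom : ∀ x ∈ Ω₁, x ≠ 0 ∧ ∃ γ : Γ, x ∈ ℳ γ)
    (hΩ₁gen : Submodule.span A Ω₁ = ⊤)
    (hΩ₁min : ∀ S ⊂ Ω₁, Submodule.span A S ≠ ⊤)
    (hΩ₂hom : ∀ x ∈ Ω₂, x ≠ 0 ∧ ∃ γ : Γ, x ∈ ℳ γ)
    (hΩ₂gen : Submodule.span A Ω₂ = ⊤)
    (hΩ₂min : ∀ S ⊂ Ω₂, Submodule.span A S ≠ ⊤) :
    Ω₁.Finite ∧ Ω₂.Finite ∧ Ω₁.ncard = Ω₂.ncard := by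
  classical
  -- Finiteness of any generating set that is minimal, from finite generation of `M`.
  have hfin : ∀ (Ω : Set M), Submodule.span A Ω = ⊤ →
      (∀ S ⊂ Ω, Submodule.span A S ≠ ⊤) → Ω.Finite := by
    intro Ω hgen hmin
    obtain ⟨F, hF⟩ := Module.Finite.fg_top (R := A) (M := M)
    have hT : ∀ f : M, ∃ t : Finset M, f ∈ F →
        ((t : Set M) ⊆ Ω ∧ f ∈ Submodule.span A (t : Set M)) := by
      intro f
      by_cases hf : f ∈ F
      · have hfΩ : f ∈ Submodule.span A Ω := by rw [hgen]; trivial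
        obtain ⟨t, ht1, ht2⟩ := Submodule.mem_span_finite_of_mem_span hfΩ
        exact ⟨t, fun _ => ⟨ht1, ht2⟩⟩
      · exact ⟨∅, fun h => absurd h hf⟩
    choose t ht using hT
    set T := F.biUnion t with hTdef
    have hTΩ : (T : Set M) ⊆ Ω := by
      intro x hx
      obtain ⟨f, hfF, hxf⟩ := Finset.mem_biUnion.mp (Finset.mem_coe.mp hx)
      exact (ht f hfF).1 (Finset.mem_coe.mpr hxf)
    have hTgen : Submodule.span A (T : Set M) = ⊤ := by
      rw [eq_top_iff, ← hF]
      apply Submodule.span_le.mpr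
      intro f hf
      have hf' : f ∈ F := Finset.mem_coe.mp hf
      have h2 := (ht f hf').2
      have hsub : (t f : Set M) ⊆ (T : Set M) := by
        intro x hx
        exact Finset.mem_coe.mpr
          (Finset.mem_biUnion.mpr ⟨f, hf', Finset.mem_coe.mp hx⟩)
      exact Submodule.span_mono hsub h2
    have hTeq : (T : Set M) = Ω := by
      by_contra hne
      exact hmin _ (ssubset_of_ne_of_subset hne hTΩ) hTgen
    rw [← hTeq]
    exact T.finite_toSet
  have hfin₁ := hfin Ω₁ hΩ₁gen hΩ₁min
  have hfin₂ := hfin Ω₂ hΩ₂gen hΩ₂min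
  refine ⟨hfin₁, hfin₂, ?_⟩
  set F₁ := hfin₁.toFinset with hF₁def
  set F₂ := hfin₂.toFinset with hF₂def
  have hF₁ : (F₁ : Set M) = Ω₁ := hfin₁.coe_toFinset
  have hF₂ : (F₂ : Set M) = Ω₂ := hfin₂.coe_toFinset
  -- minimality in pointwise form
  have hmin' : ∀ (Ω : Set M) (F : Finset M), (F : Set M) = Ω →
      (∀ S ⊂ Ω, Submodule.span A S ≠ ⊤) → Submodule.span A Ω = ⊤ →
      ∀ y ∈ F, y ∉ Submodule.span A ((F : Set M) \ {y}) := by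
    intro Ω F hFΩ hmin hgen y hy hyspan
    have hyΩ : y ∈ Ω := hFΩ ▸ Finset.mem_coe.mpr hy
    refine hmin (Ω \ {y}) ?_ ?_
    · refine Set.ssubset_iff_subset_ne.mpr ⟨Set.diff_subset, fun h => ?_⟩
      have hymem : y ∈ Ω \ {y} := h.symm ▸ hyΩ
      exact hymem.2 rfl
    · rw [eq_top_iff, ← hgen]
      apply Submodule.span_le.mpr
      intro x hx
      by_cases hxy : x = y
      · subst hxy
        rw [hFΩ] at hyspan
        exact hyspan
      · exact Submodule.subset_span ⟨hx, hxy⟩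
  have hhom₁ : ∀ x ∈ F₁, ∃ γ : Γ, x ∈ ℳ γ := by
    intro x hx
    exact (hΩ₁hom x (hF₁ ▸ Finset.mem_coe.mpr hx)).2
  have hhom₂ : ∀ x ∈ F₂, ∃ γ : Γ, x ∈ ℳ γ := by
    intro x hx
    exact (hΩ₂hom x (hF₂ ▸ Finset.mem_coe.mpr hx)).2
  have hgen₁ : Submodule.span A (F₁ : Set M) = ⊤ := by rw [hF₁]; exact hΩ₁gen
  have hgen₂ : Submodule.span A (F₂ : Set M) = ⊤ := by rw [hF₂]; exact hΩ₂gen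
  have hmin₁ := hmin' Ω₁ F₁ hF₁ hΩ₁min hΩ₁gen
  have hmin₂ := hmin' Ω₂ F₂ hF₂ hΩ₂min hΩ₂gen
  have h12 : F₂.card ≤ F₁.card := card_le_card 𝒜 ℳ F₁ F₂ hhom₁ hhom₂ hgen₁ hgen₂ hmin₂
  have h21 : F₁.card ≤ F₂.card := card_le_card 𝒜 ℳ F₂ F₁ hhom₂ hhom₁ hgen₂ hgen₁ hmin₁
  rw [← hF₁, ← hF₂, Set.ncard_coe_finset, Set.ncard_coe_finset]
  omega
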